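/- Let μ₁,…,μ_N be Borel probability measures on ℝ^d with finite first moments, let h : ℝ^d → [0,∞) be strictly convex, and set c_h(x₁,…,x_N) = h(x₁ + ⋯ + x_N). Assume there exists γ ∈ Γ(μ₁,…,μ_N) whose support is contained in {(x₁,…,x_N) : x₁ + ⋯ + x_N = k} for some k ∈ ℝ^d. Then: (i) necessarily k = Σ_{j=1}^N ∫ x dμ_j(x); and (ii) a plan γ̃ ∈ Γ(μ₁,…,μ_N) minimizes ∫ c_h dγ̃ over Γ(μ₁,…,μ_N) if and only if the support of γ̃ is contained in {(x₁,…,x_N) : x₁ + ⋯ + x_N = k}. -/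

import Mathlib

open MeasureTheory

noncomputable section

abbrev Euc (d : ℕ) := EuclideanSpace ℝ (Fin d)

/-- `Γ(μ₁, …, μ_N)`: probability measures on `(ℝ^d)^N` whose `i`-th marginal is `μ i`. -/
def Plans (d N : ℕ) (μ : Fin N → Measure (Euc d)) : Set (Measure (Fin N → Euc d)) :=
  {γ | IsProbabilityMeasure γ ∧ ∀ i : Fin N, γ.map (fun x => x i) = μ i}

/-- The (topological) support of a measure. -/
def msupp {α : Type*} [TopologicalSpace α] [MeasurableSpace α] (γ : Measure α) : Set α :=
  {x | ∀ U : Set α, IsOpen U → x ∈ U → 0 < γ U}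

lemma msupp_compl_null {α : Type*} [TopologicalSpace α] [MeasurableSpace α]
    [SecondCountableTopology α] (γ : Measure α) : γ (msupp γ)ᶜ = 0 := by
  apply measure_null_of_locally_null
  intro x hx
  simp only [msupp, Set.mem_compl_iff, Set.mem_setOf_eq, not_forall] at hx
  obtain ⟨U, hU, hxU, hγU⟩ := hx
  exact ⟨U, mem_nhdsWithin_of_mem_nhds (hU.mem_nhds hxU),
    le_antisymm (not_lt.mp hγU) zero_le⟩

lemma ae_of_msupp_subset {α : Type*} [TopologicalSpace α] [MeasurableSpace α]
    [SecondCountableTopology α] (γ : Measure α) {C : Set α} (hC : msupp γ ⊆ C) :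
    ∀ᵐ x ∂γ, x ∈ C := by
  rw [ae_iff]
  refine measure_mono_null ?_ (msupp_compl_null γ)
  intro x hx
  simp only [Set.mem_setOf_eq] at hx
  exact fun hm => hx (hC hm)

lemma msupp_subset_of_ae {α : Type*} [TopologicalSpace α] [MeasurableSpace α]
    (γ : Measure α) {C : Set α} (hC : IsClosed C) (hae : ∀ᵐ x ∂γ, x ∈ C) :
    msupp γ ⊆ C := by
  intro x hx
  by_contra hxC
  have h1 := hx Cᶜ hC.isOpen_compl hxC
  rw [ae_iff] at hae
  have : {a | ¬ a ∈ C} = Cᶜ := rfl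
  rw [this] at hae
  rw [hae] at h1
  exact lt_irrefl _ h1

theorem optimality_characterization_strictly_convex
    (d N : ℕ) (μ : Fin N → Measure (Euc d))
    (hprob : ∀ i, IsProbabilityMeasure (μ i))
    (hmom : ∀ i, Integrable (fun x => ‖x‖) (μ i))
    (h : Euc d → ℝ) (hconv : StrictConvexOn ℝ Set.univ h) (hpos : ∀ x, 0 ≤ h x)
    (γ : Measure (Fin N → Euc d)) (hγ : γ ∈ Plans d N μ)
    (k : Euc d) (hsupp : msupp γ ⊆ {x : Fin N → Euc d | ∑ i, x i = k}) :
    k = ∑ j : Fin N, ∫ x, x ∂(μ j) ∧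
    ∀ γ' ∈ Plans d N μ,
      ((∀ γ'' ∈ Plans d N μ,
          ∫⁻ x, ENNReal.ofReal (h (∑ i, x i)) ∂γ' ≤ ∫⁻ x, ENNReal.ofReal (h (∑ i, x i)) ∂γ'')
        ↔ msupp γ' ⊆ {x : Fin N → Euc d | ∑ i, x i = k}) := by
  -- notation
  set S : (Fin N → Euc d) → Euc d := fun x => ∑ i, x i with hS
  have hScont : Continuous S := continuous_finset_sum _ fun i _ => continuous_apply i
  have hcont : Continuous h :=
    continuousOn_univ.mp (hconv.convexOn.continuousOn isOpen_univ)
  have hCclosed : IsClosed {x : Fin N → Euc d | S x = k} :=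
    isClosed_eq hScont continuous_const
  -- integrability and mean of S for any plan
  have hmean : ∀ γ'' ∈ Plans d N μ,
      Integrable S γ'' ∧ ∫ x, S x ∂γ'' = ∑ j : Fin N, ∫ x, x ∂(μ j) := by
    intro γ'' ⟨hp, hm⟩
    have hproj : ∀ i : Fin N, Integrable (fun x : Fin N → Euc d => x i) γ'' ∧
        ∫ x, x i ∂γ'' = ∫ x, x ∂(μ i) := by
      intro i
      have hid : Integrable (fun y : Euc d => y) (μ i) :=
        (integrable_norm_iff aestronglyMeasurable_id).mp (hmom i)
      have hmeas : Measurable (fun x : Fin N → Euc d => x i) := measurable_pi_apply i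
      rw [← hm i] at hid
      constructor
      · exact (integrable_map_measure aestronglyMeasurable_id hmeas.aemeasurable).mp hid
      · rw [← hm i]
        exact (integral_map (f := fun y : Euc d => y) hmeas.aemeasurable
          aestronglyMeasurable_id).symm
    constructor
    · exact integrable_finset_sum _ fun i _ => (hproj i).1
    · rw [hS]
      rw [integral_finset_sum _ fun i _ => (hproj i).1]
      exact Finset.sum_congr rfl fun i _ => (hproj i).2
  obtain ⟨hγprob, hγmarg⟩ := hγ
  -- a.e. statement for γ
  have hγae : ∀ᵐ x ∂γ, S x = k := ae_of_msupp_subset γ hsupp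
  -- part (i)
  have hintγ : ∫ x, S x ∂γ = k := by
    rw [integral_congr_ae (g := fun _ => k) hγae, integral_const]
    simp [hγprob.measure_univ]
  have part1 : k = ∑ j : Fin N, ∫ x, x ∂(μ j) := by
    rw [← (hmean γ ⟨hγprob, hγmarg⟩).2, hintγ]
  refine ⟨part1, ?_⟩
  -- value of γ
  have hγval : ∫⁻ x, ENNReal.ofReal (h (S x)) ∂γ = ENNReal.ofReal (h k) := by
    rw [lintegral_congr_ae (hγae.mono fun x hx => by rw [hx])]
    simp [hγprob.measure_univ]
  -- lower bound for any plan
  have hlb : ∀ γ'' ∈ Plans d N μ,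
      ENNReal.ofReal (h k) ≤ ∫⁻ x, ENNReal.ofReal (h (S x)) ∂γ'' := by
    intro γ'' hγ''
    have hp'' := hγ''.1
    by_cases htop : ∫⁻ x, ENNReal.ofReal (h (S x)) ∂γ'' = ⊤
    · rw [htop]; exact le_top
    · have hsm : AEStronglyMeasurable (fun x => h (S x)) γ'' :=
        (hcont.comp hScont).aestronglyMeasurable
      have hint : Integrable (fun x => h (S x)) γ'' :=
        ⟨hsm, (hasFiniteIntegral_iff_ofReal (Filter.Eventually.of_forall fun x => hpos _)).mpr
          (lt_top_iff_ne_top.mpr htop)⟩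
      have hSint := (hmean γ'' hγ'').1
      have hmean'' : ∫ x, S x ∂γ'' = k := by rw [(hmean γ'' hγ'').2, ← part1]
      have hjensen : h (⨍ x, S x ∂γ'') ≤ ⨍ x, h (S x) ∂γ'' :=
        hconv.convexOn.map_average_le hcont.continuousOn isClosed_univ
          (Filter.Eventually.of_forall fun _ => Set.mem_univ _) hSint hint
      rw [average_eq_integral, average_eq_integral, hmean''] at hjensen
      calc ENNReal.ofReal (h k) ≤ ENNReal.ofReal (∫ x, h (S x) ∂γ'') :=
            ENNReal.ofReal_le_ofReal hjensen
        _ = ∫⁻ x, ENNReal.ofReal (h (S x)) ∂γ'' :=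
            ofReal_integral_eq_lintegral_ofReal hint
              (Filter.Eventually.of_forall fun x => hpos _)
  intro γ' hγ'
  obtain ⟨hp', hm'⟩ := hγ'
  constructor
  · -- optimal → support condition
    intro hopt
    have hle : ∫⁻ x, ENNReal.ofReal (h (S x)) ∂γ' ≤ ENNReal.ofReal (h k) := by
      rw [← hγval]; exact hopt γ ⟨hγprob, hγmarg⟩
    have htop : ∫⁻ x, ENNReal.ofReal (h (S x)) ∂γ' ≠ ⊤ :=
      ne_top_of_le_ne_top ENNReal.ofReal_ne_top hle
    have hsm : AEStronglyMeasurable (fun x => h (S x)) γ' :=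
      (hcont.comp hScont).aestronglyMeasurable
    have hint : Integrable (fun x => h (S x)) γ' :=
      ⟨hsm, (hasFiniteIntegral_iff_ofReal (Filter.Eventually.of_forall fun x => hpos _)).mpr
        (lt_top_iff_ne_top.mpr htop)⟩
    have hSint := (hmean γ' ⟨hp', hm'⟩).1
    have hmean' : ∫ x, S x ∂γ' = k := by rw [(hmean γ' ⟨hp', hm'⟩).2, ← part1]
    have hintle : ∫ x, h (S x) ∂γ' ≤ h k := by
      rw [integral_eq_lintegral_of_nonneg_ae (Filter.Eventually.of_forall fun x => hpos _) hsm]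
      calc (∫⁻ x, ENNReal.ofReal (h (S x)) ∂γ').toReal
          ≤ (ENNReal.ofReal (h k)).toReal := ENNReal.toReal_mono ENNReal.ofReal_ne_top hle
        _ = h k := ENNReal.toReal_ofReal (hpos k)
    rcases hconv.ae_eq_const_or_map_average_lt hcont.continuousOn isClosed_univ
        (Filter.Eventually.of_forall fun _ => Set.mem_univ _) hSint hint with hc | hlt
    · rw [average_eq_integral, hmean'] at hc
      exact msupp_subset_of_ae γ' hCclosed hc
    · rw [average_eq_integral, average_eq_integral, hmean'] at hlt
      exact absurd hintle (not_le.mpr hlt)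
  · -- support condition → optimal
    intro hs γ'' hγ''
    have hae' : ∀ᵐ x ∂γ', S x = k := ae_of_msupp_subset γ' hs
    have hval' : ∫⁻ x, ENNReal.ofReal (h (S x)) ∂γ' = ENNReal.ofReal (h k) := by
      rw [lintegral_congr_ae (hae'.mono fun x hx => by rw [hx])]
      simp [hp'.measure_univ]
    rw [hval']
    exact hlb γ'' hγ''

end
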